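/- Fix α ∈ (0,1). Let f_α : (0,∞) → [0,∞) be a measurable function with ∫₀^∞ f_α(t) dt = 1 and ∫₀^∞ e^{-λ t} f_α(t) dt = e^{-λ^α} for all λ ≥ 0. Then for every integer n ≥ 1, every λ > 0 and all 0 < w_l < 1 (l = 1,…,n): ∫₀^∞ s^{-nα} e^{-λ s/(∏_{l=1}^n w_l)} f_α(s) ds = (λ^{nα} / (Γ(α)^n ∏_{l=1}^n w_l^{lα-1})) ∫₀^{w₁} ⋯ ∫₀^{w_n} ∏_{l=1}^n (w_l - r_l)^{α-1} r_l^{-(n-l+1)α-1} e^{-λ^α/(∏_{l=1}^n r_l)^α} dr_n ⋯ dr₁. -/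

import Mathlib

open MeasureTheory Set

lemma lintegral_image_deriv {s : Set ℝ} {f f' : ℝ → ℝ} (hs : MeasurableSet s)
    (hf' : ∀ x ∈ s, HasDerivWithinAt f (f' x) s x) (hf : Set.InjOn f s) (g : ℝ → ENNReal) :
    ∫⁻ x in f '' s, g x = ∫⁻ x in s, ENNReal.ofReal |f' x| * g (f x) := by
  simpa only [ContinuousLinearMap.det_toSpanSingleton] using
    lintegral_image_eq_lintegral_abs_det_fderiv_mul volume hs
      (fun x hx => (hf' x hx).hasFDerivWithinAt) hf g

lemma image_phi {w : ℝ} (hw : 0 < w) : (fun r : ℝ => w / r - 1) '' (Ioo 0 w) = Ioi 0 := by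
  ext x
  constructor
  · rintro ⟨r, ⟨hr0, hrw⟩, rfl⟩
    have : 1 < w / r := (one_lt_div hr0).2 hrw
    simpa using this
  · intro hx
    rw [mem_Ioi] at hx
    have h1x : (0:ℝ) < 1 + x := by linarith
    refine ⟨w / (1 + x), ⟨by positivity, ?_⟩, ?_⟩
    · rw [div_lt_iff₀ h1x]
      nlinarith
    · field_simp
      ring

lemma hasDeriv_phi {w r : ℝ} (hr : r ≠ 0) (s : Set ℝ) :
    HasDerivWithinAt (fun r : ℝ => w / r - 1) (-(w / r ^ 2)) s r := by
  have h := ((hasDerivAt_inv hr).const_mul w).sub_const 1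
  have h2 : w * -(r ^ 2)⁻¹ = -(w / r ^ 2) := by field_simp
  have h3 : (fun r : ℝ => w / r - 1) = fun r : ℝ => w * r⁻¹ - 1 := by
    funext y; rw [div_eq_mul_inv]
  rw [h3]
  rw [h2] at h
  exact h.hasDerivWithinAt

lemma injOn_phi {w : ℝ} (hw : 0 < w) : Set.InjOn (fun r : ℝ => w / r - 1) (Ioo 0 w) := by
  intro a ha b hb hab
  simp only [sub_left_inj] at hab
  have ha0 := ha.1.ne'; have hb0 := hb.1.ne'
  rw [div_eq_div_iff ha0 hb0] at hab
  exact (mul_left_cancel₀ hw.ne' hab).symm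

lemma integrable_gamma_kernel {α : ℝ} (hα : 0 < α) {c : ℝ} (hc : 0 < c) :
    IntegrableOn (fun x : ℝ => x ^ (α - 1) * Real.exp (-(c * x))) (Ioi 0) := by
  have h0 := Real.GammaIntegral_convergent hα
  have h1 : IntegrableOn (fun x : ℝ => Real.exp (-(c * x)) * (c * x) ^ (α - 1)) (Ioi 0) :=
    (integrableOn_Ioi_comp_mul_left_iff (fun x => Real.exp (-x) * x ^ (α - 1)) 0 hc).2
      (by simpa using h0)
  have h2 : IntegrableOn (fun x : ℝ => c ^ (α-1) * (x ^ (α - 1) * Real.exp (-(c * x)))) (Ioi 0) := by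
    apply (h1.congr_fun ?_ measurableSet_Ioi)
    intro x hx
    rw [mem_Ioi] at hx
    simp only []
    rw [Real.mul_rpow hc.le hx.le]
    ring
  exact (integrable_const_mul_iff (IsUnit.mk0 _ (by positivity : (c:ℝ) ^ (α-1) ≠ 0)) _).1 h2

lemma gamma_lint {α : ℝ} (hα : 0 < α) {c : ℝ} (hc : 0 < c) :
    ∫⁻ x in Ioi (0:ℝ), ENNReal.ofReal (x ^ (α - 1) * Real.exp (-(c * x)))
      = ENNReal.ofReal ((1 / c) ^ α * Real.Gamma α) := by
  rw [← Real.integral_rpow_mul_exp_neg_mul_Ioi hα hc]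
  rw [ofReal_integral_eq_lintegral_ofReal (integrable_gamma_kernel hα hc)]
  filter_upwards [ae_restrict_mem measurableSet_Ioi] with x hx
  have : (0:ℝ) < x := hx
  positivity

lemma laplace_lint {α : ℝ} {f : ℝ → ℝ} (hα : α ∈ Set.Ioo (0:ℝ) 1) (hfmeas : Measurable f)
    (hfnn : ∀ t ∈ Set.Ioi (0 : ℝ), 0 ≤ f t)
    (hflap : ∀ c : ℝ, 0 ≤ c →
      ∫ t in Set.Ioi (0 : ℝ), Real.exp (-c * t) * f t = Real.exp (-(c ^ α)))
    {c : ℝ} (hc : 0 ≤ c) :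
    ∫⁻ t in Ioi (0:ℝ), ENNReal.ofReal (Real.exp (-(c * t)) * f t)
      = ENNReal.ofReal (Real.exp (-(c ^ α))) := by
  have hnn : 0 ≤ᵐ[volume.restrict (Ioi (0:ℝ))] fun t => Real.exp (-(c * t)) * f t := by
    filter_upwards [ae_restrict_mem measurableSet_Ioi] with t ht
    exact mul_nonneg (Real.exp_nonneg _) (hfnn t ht)
  have hm : AEStronglyMeasurable (fun t => Real.exp (-(c * t)) * f t)
      (volume.restrict (Ioi (0:ℝ))) := by
    apply Measurable.aestronglyMeasurable
    fun_prop
  have heq := integral_eq_lintegral_of_nonneg_ae hnn hm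
  have hval : ∫ t in Set.Ioi (0 : ℝ), Real.exp (-(c * t)) * f t = Real.exp (-(c ^ α)) := by
    rw [← hflap c hc]
    congr 1 with t
    rw [neg_mul]
  rw [hval] at heq
  have hfin : (∫⁻ t in Ioi (0:ℝ), ENNReal.ofReal (Real.exp (-(c * t)) * f t)) ≠ ⊤ := by
    intro htop
    rw [htop, ENNReal.toReal_top] at heq
    exact absurd heq (Real.exp_pos _).ne'
  rw [← ENNReal.ofReal_toReal hfin, ← heq]

lemma star_id {α G lam w0 W' r d P' : ℝ} (hα : 0 < α) (hG : 0 < G) (hlam : 0 < lam)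
    (hw0 : 0 < w0) (hW' : 0 < W') (hr : 0 < r) (hd : 0 < d) (hP' : 0 < P') (n : ℕ) :
    (lam / (w0 * W')) ^ α / G * (w0 / r ^ 2) * ((d / r) ^ (α - 1))
        * ((lam / r) ^ ((n:ℝ) * α) / (G ^ n * P'))
      = lam ^ (((n:ℝ) + 1) * α) / (G ^ (n + 1) * (w0 ^ (α - 1) * (P' * W' ^ α)))
        * (d ^ (α - 1) * r ^ (-(((n:ℝ) + 1) * α) - 1)) := by
  have hL : 0 < (lam / (w0 * W')) ^ α / G * (w0 / r ^ 2) * ((d / r) ^ (α - 1))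
      * ((lam / r) ^ ((n:ℝ) * α) / (G ^ n * P')) := by positivity
  have hR : 0 < lam ^ (((n:ℝ) + 1) * α) / (G ^ (n + 1) * (w0 ^ (α - 1) * (P' * W' ^ α)))
      * (d ^ (α - 1) * r ^ (-(((n:ℝ) + 1) * α) - 1)) := by positivity
  refine Real.log_injOn_pos (mem_Ioi.2 hL) (mem_Ioi.2 hR) ?_
  simp (disch := positivity) only [Real.log_mul, Real.log_div, Real.log_rpow, Real.log_pow]
  push_cast
  ring

lemma pi_split {n : ℕ} (S : Fin (n+1) → Set ℝ) (hS : ∀ l, MeasurableSet (S l))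
    (G : (Fin (n+1) → ℝ) → ENNReal) (hG : Measurable G) :
    ∫⁻ r in Set.univ.pi S, G r
      = ∫⁻ a in S 0, ∫⁻ b in Set.univ.pi (fun l : Fin n => S l.succ), G (Fin.cons a b) := by
  have hSm : MeasurableSet (Set.univ.pi S) := MeasurableSet.univ_pi hS
  have hS'm : MeasurableSet (Set.univ.pi (fun l : Fin n => S l.succ)) :=
    MeasurableSet.univ_pi (fun l => hS l.succ)
  rw [← lintegral_indicator hSm]
  have mp := measurePreserving_piFinSuccAbove (fun _ : Fin (n+1) => (volume : Measure ℝ)) 0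
  set e := MeasurableEquiv.piFinSuccAbove (fun _ : Fin (n+1) => ℝ) 0 with he
  have hcons : ∀ (a : ℝ) (b : Fin n → ℝ), e.symm (a, b) = Fin.cons a b := by
    intro a b
    simp only [he, MeasurableEquiv.piFinSuccAbove, MeasurableEquiv.symm_mk,
      MeasurableEquiv.coe_mk, Equiv.symm_symm, Fin.insertNthEquiv, Equiv.coe_fn_mk,
      Fin.insertNth_zero, cast_eq]
  have hind : Measurable ((Set.univ.pi S).indicator G) := hG.indicator hSm
  calc ∫⁻ r, (Set.univ.pi S).indicator G r
      = ∫⁻ y, ((Set.univ.pi S).indicator G ∘ e.symm) y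
          ∂((volume : Measure ℝ).prod (Measure.pi fun _ : Fin n => (volume : Measure ℝ))) := by
        rw [← mp.lintegral_comp_emb e.measurableEmbedding]
        refine lintegral_congr fun r => ?_
        simp
    _ = ∫⁻ a, ∫⁻ b, ((Set.univ.pi S).indicator G) (Fin.cons a b)
          ∂(Measure.pi fun _ : Fin n => (volume : Measure ℝ)) := by
        rw [lintegral_prod _ ((hind.comp e.symm.measurable).aemeasurable)]
        refine lintegral_congr fun a => lintegral_congr fun b => ?_
        simp [hcons]
    _ = ∫⁻ a, (S 0).indicator
          (fun a' => ∫⁻ b in Set.univ.pi (fun l : Fin n => S l.succ), G (Fin.cons a' b)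
            ∂(Measure.pi fun _ : Fin n => (volume : Measure ℝ))) a := by
        refine lintegral_congr fun a => ?_
        by_cases h1 : a ∈ S 0
        · rw [Set.indicator_of_mem h1, ← lintegral_indicator hS'm]
          refine lintegral_congr fun b => ?_
          by_cases h2 : b ∈ Set.univ.pi (fun l : Fin n => S l.succ)
          · rw [Set.indicator_of_mem h2]
            rw [Set.indicator_of_mem]
            rw [Set.mem_univ_pi]
            intro i
            refine Fin.cases ?_ ?_ i
            · simpa using h1
            · intro j
              simpa using (Set.mem_univ_pi.1 h2) j
          · rw [Set.indicator_of_notMem h2, Set.indicator_of_notMem]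
            intro hmem
            exact h2 (Set.mem_univ_pi.2 fun j => by simpa using (Set.mem_univ_pi.1 hmem) j.succ)
        · rw [Set.indicator_of_notMem h1]
          rw [← lintegral_zero]
          refine lintegral_congr fun b => ?_
          rw [Set.indicator_of_notMem]
          intro hmem
          exact h1 (by simpa using (Set.mem_univ_pi.1 hmem) 0)
    _ = ∫⁻ a in S 0, ∫⁻ b in Set.univ.pi (fun l : Fin n => S l.succ), G (Fin.cons a b) := by
        rw [lintegral_indicator (hS 0), ← volume_pi]

lemma rhs_split (α : ℝ) (hα0 : 0 < α) (n : ℕ) (lam : ℝ) (hlam : 0 < lam)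
    (w : Fin (n+1) → ℝ) (hw : ∀ l, 0 < w l) :
    ∫⁻ r in Set.univ.pi (fun l : Fin (n+1) => Set.Ioo (0 : ℝ) (w l)),
        ENNReal.ofReal
          ((∏ l, ((w l - r l) ^ (α - 1) * r l ^ (-((((n:ℝ)+1) - ((l : ℕ) : ℝ)) * α) - 1))) *
            Real.exp (-(lam ^ α) / (∏ l, r l) ^ α))
      = ∫⁻ a in Set.Ioo (0:ℝ) (w 0),
          ENNReal.ofReal ((w 0 - a) ^ (α - 1) * a ^ (-(((n:ℝ)+1) * α) - 1)) *
          ∫⁻ b in Set.univ.pi (fun l : Fin n => Set.Ioo (0 : ℝ) (w l.succ)),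
            ENNReal.ofReal
              ((∏ l, ((w l.succ - b l) ^ (α - 1) * b l ^ (-(((n:ℝ) - ((l : ℕ) : ℝ)) * α) - 1))) *
                Real.exp (-((lam / a) ^ α) / (∏ l, b l) ^ α)) := by
  rw [pi_split _ (fun l => measurableSet_Ioo) _ (by fun_prop)]
  refine setLIntegral_congr_fun measurableSet_Ioo (fun a ha => ?_)
  obtain ⟨ha0, haw⟩ := ha
  rw [← lintegral_const_mul' _ _ ENNReal.ofReal_ne_top]
  refine setLIntegral_congr_fun (MeasurableSet.univ_pi fun l => measurableSet_Ioo)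
    (fun b hb => ?_)
  have hbl : ∀ l, 0 < b l := fun l => ((Set.mem_univ_pi.1 hb) l).1
  have hB : 0 < ∏ l, b l := Finset.prod_pos fun l _ => hbl l
  have e1 : (∏ l : Fin (n+1), ((w l - (Fin.cons a b : Fin (n+1) → ℝ) l) ^ (α - 1)
        * (Fin.cons a b : Fin (n+1) → ℝ) l ^ (-((((n:ℝ)+1) - ((l : ℕ) : ℝ)) * α) - 1)))
      = ((w 0 - a) ^ (α - 1) * a ^ (-(((n:ℝ)+1) * α) - 1))
        * ∏ l : Fin n, ((w l.succ - b l) ^ (α - 1)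
            * b l ^ (-(((n:ℝ) - ((l : ℕ) : ℝ)) * α) - 1)) := by
    rw [Fin.prod_univ_succ]
    congr 1
    · norm_num
    · refine Finset.prod_congr rfl fun l _ => ?_
      simp only [Fin.cons_succ]
      congr 2
      push_cast [Fin.val_succ]
      ring
  have e2 : Real.exp (-(lam ^ α) / (∏ l : Fin (n+1), (Fin.cons a b : Fin (n+1) → ℝ) l) ^ α)
      = Real.exp (-((lam / a) ^ α) / (∏ l, b l) ^ α) := by
    congr 1
    rw [Fin.prod_univ_succ]
    simp only [Fin.cons_zero, Fin.cons_succ]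
    rw [Real.mul_rpow ha0.le hB.le, Real.div_rpow hlam.le ha0.le]
    have h1 : a ^ α ≠ 0 := by positivity
    have h2 : (∏ l, b l) ^ α ≠ 0 := by positivity
    field_simp
  rw [e1, e2, show (((w 0 - a) ^ (α - 1) * a ^ (-(((n:ℝ)+1) * α) - 1))
      * ∏ l : Fin n, ((w l.succ - b l) ^ (α - 1) * b l ^ (-(((n:ℝ) - ((l : ℕ) : ℝ)) * α) - 1)))
      * Real.exp (-((lam / a) ^ α) / (∏ l, b l) ^ α)
    = ((w 0 - a) ^ (α - 1) * a ^ (-(((n:ℝ)+1) * α) - 1))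
      * ((∏ l : Fin n, ((w l.succ - b l) ^ (α - 1) * b l ^ (-(((n:ℝ) - ((l : ℕ) : ℝ)) * α) - 1)))
        * Real.exp (-((lam / a) ^ α) / (∏ l, b l) ^ α)) from by ring,
    ENNReal.ofReal_mul (mul_nonneg (Real.rpow_nonneg (by linarith) _) (Real.rpow_nonneg ha0.le _))]


lemma lhs_chain (α : ℝ) (hα0 : 0 < α) (f : ℝ → ℝ) (hfmeas : Measurable f) (n : ℕ)
    (lam W' P' : ℝ) (hlam : 0 < lam) (hW' : 0 < W') (hP' : 0 < P') (hG : 0 < Real.Gamma α)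
    (w0 : ℝ) (hw0 : 0 < w0) (IF : ℝ → ENNReal)
    (hIH : ∀ m : ℝ, 0 < m →
      (∫⁻ s in Ioi (0:ℝ), ENNReal.ofReal (s ^ (-(n:ℝ)*α) * Real.exp (-(m*s)/W') * f s))
        = ENNReal.ofReal (m ^ ((n:ℝ)*α)/(Real.Gamma α^n * P')) * IF m) :
    ∫⁻ s in Ioi (0:ℝ),
        ENNReal.ofReal (s ^ (-((n:ℝ)+1) * α) * Real.exp (-(lam*s)/(w0 * W')) * f s)
      = ∫⁻ r in Ioo (0:ℝ) w0,
          ENNReal.ofReal ((lam/(w0*W'))^α/Real.Gamma α) * (ENNReal.ofReal (w0/r^2)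
            * (ENNReal.ofReal (((w0-r)/r)^(α-1))
              * (ENNReal.ofReal ((lam/r)^((n:ℝ)*α)/(Real.Gamma α^n*P')) * IF (lam/r)))) := by
  set c : ℝ := lam / (w0 * W') with hcdef
  have hc : 0 < c := by positivity
  -- pointwise Gamma representation of s^(-α)
  have h1 : ∀ s : ℝ, 0 < s → ENNReal.ofReal (s ^ (-α))
      = ENNReal.ofReal (c ^ α / Real.Gamma α)
        * ∫⁻ x in Ioi (0:ℝ), ENNReal.ofReal (x ^ (α-1) * Real.exp (-((c*s) * x))) := by
    intro s hs
    rw [gamma_lint hα0 (mul_pos hc hs), ← ENNReal.ofReal_mul (by positivity)]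
    congr 1
    rw [one_div, Real.inv_rpow (by positivity), Real.mul_rpow hc.le hs.le,
      Real.rpow_neg hs.le]
    have h2 : c ^ α ≠ 0 := by positivity
    have h3 : s ^ α ≠ 0 := by positivity
    field_simp
  calc
    ∫⁻ s in Ioi (0:ℝ),
        ENNReal.ofReal (s ^ (-((n:ℝ)+1) * α) * Real.exp (-(lam*s)/(w0 * W')) * f s)
      = ∫⁻ s in Ioi (0:ℝ), ENNReal.ofReal (c ^ α / Real.Gamma α)
          * ∫⁻ x in Ioi (0:ℝ), ENNReal.ofReal (x ^ (α-1) * Real.exp (-((c*s) * x)))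
            * ENNReal.ofReal (s ^ (-(n:ℝ)*α) * Real.exp (-(lam*s)/(w0 * W')) * f s) := by
        refine setLIntegral_congr_fun measurableSet_Ioi
          (fun s hs => ?_)
        rw [mem_Ioi] at hs
        rw [lintegral_mul_const' _ _ ENNReal.ofReal_ne_top, ← mul_assoc, ← h1 s hs,
          ← ENNReal.ofReal_mul (by positivity)]
        congr 1
        have hs' : s ^ (-α) * s ^ (-(n:ℝ)*α) = s ^ (-((n:ℝ)+1) * α) := by
          rw [← Real.rpow_add hs]; ring_nf
        calc s ^ (-((n:ℝ)+1) * α) * Real.exp (-(lam*s)/(w0 * W')) * f s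
            = (s ^ (-α) * s ^ (-(n:ℝ)*α)) * Real.exp (-(lam*s)/(w0 * W')) * f s := by
              rw [hs']
          _ = s ^ (-α) * (s ^ (-(n:ℝ)*α) * Real.exp (-(lam*s)/(w0 * W')) * f s) := by ring
    _ = ENNReal.ofReal (c ^ α / Real.Gamma α) * ∫⁻ s in Ioi (0:ℝ), ∫⁻ x in Ioi (0:ℝ),
          ENNReal.ofReal (x ^ (α-1) * Real.exp (-((c*s) * x)))
            * ENNReal.ofReal (s ^ (-(n:ℝ)*α) * Real.exp (-(lam*s)/(w0 * W')) * f s) := by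
        rw [lintegral_const_mul' _ _ ENNReal.ofReal_ne_top]
    _ = ENNReal.ofReal (c ^ α / Real.Gamma α) * ∫⁻ x in Ioi (0:ℝ), ∫⁻ s in Ioi (0:ℝ),
          ENNReal.ofReal (x ^ (α-1) * Real.exp (-((c*s) * x)))
            * ENNReal.ofReal (s ^ (-(n:ℝ)*α) * Real.exp (-(lam*s)/(w0 * W')) * f s) := by
        congr 1
        refine lintegral_lintegral_swap ?_
        apply Measurable.aemeasurable
        fun_prop
    _ = ENNReal.ofReal (c ^ α / Real.Gamma α) * ∫⁻ x in Ioi (0:ℝ), ENNReal.ofReal (x ^ (α-1))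
          * ∫⁻ s in Ioi (0:ℝ),
            ENNReal.ofReal (s ^ (-(n:ℝ)*α) * Real.exp (-((lam*(1+x)/w0)*s)/W') * f s) := by
        congr 1
        refine setLIntegral_congr_fun measurableSet_Ioi
          (fun x hx => ?_)
        rw [← lintegral_const_mul' _ _ ENNReal.ofReal_ne_top]
        refine setLIntegral_congr_fun measurableSet_Ioi
          (fun s hs => ?_)
        rw [mem_Ioi] at hx hs
        have hE : Real.exp (-((c*s) * x)) * Real.exp (-(lam*s)/(w0*W'))
            = Real.exp (-((lam*(1+x)/w0)*s)/W') := by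
          rw [← Real.exp_add]
          congr 1
          rw [hcdef]
          field_simp
          ring
        rw [ENNReal.ofReal_mul (by positivity), mul_assoc,
          ← ENNReal.ofReal_mul (Real.exp_nonneg _)]
        congr 2
        rw [← hE]
        ring
    _ = ENNReal.ofReal (c ^ α / Real.Gamma α) * ∫⁻ x in Ioi (0:ℝ), ENNReal.ofReal (x ^ (α-1))
          * (ENNReal.ofReal ((lam*(1+x)/w0) ^ ((n:ℝ)*α)/(Real.Gamma α^n * P')) * IF (lam*(1+x)/w0)) := by
        congr 1
        refine setLIntegral_congr_fun measurableSet_Ioi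
          (fun x hx => ?_)
        rw [mem_Ioi] at hx
        rw [hIH _ (by positivity)]
    _ = ENNReal.ofReal (c ^ α / Real.Gamma α) * ∫⁻ r in Ioo (0:ℝ) w0,
          ENNReal.ofReal |(-(w0 / r^2))| * (ENNReal.ofReal ((w0/r - 1) ^ (α-1))
            * (ENNReal.ofReal ((lam*(1+(w0/r - 1))/w0) ^ ((n:ℝ)*α)/(Real.Gamma α^n * P'))
              * IF (lam*(1+(w0/r - 1))/w0))) := by
        congr 1
        rw [show Ioi (0:ℝ) = (fun r : ℝ => w0 / r - 1) '' Ioo 0 w0 from (image_phi hw0).symm,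
          lintegral_image_deriv (f' := fun r => -(w0 / r^2)) measurableSet_Ioo
            (fun r hr => hasDeriv_phi hr.1.ne' _) (injOn_phi hw0)]
    _ = ∫⁻ r in Ioo (0:ℝ) w0,
          ENNReal.ofReal ((lam/(w0*W'))^α/Real.Gamma α) * (ENNReal.ofReal (w0/r^2)
            * (ENNReal.ofReal (((w0-r)/r)^(α-1))
              * (ENNReal.ofReal ((lam/r)^((n:ℝ)*α)/(Real.Gamma α^n*P')) * IF (lam/r)))) := by
        rw [← lintegral_const_mul' _ _ ENNReal.ofReal_ne_top]
        refine setLIntegral_congr_fun measurableSet_Ioo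
          (fun r hr => ?_)
        obtain ⟨hr0, hrw⟩ := hr
        have habs : |(-(w0 / r^2))| = w0 / r^2 := by
          rw [abs_neg, abs_of_pos (by positivity)]
        have hphi : w0 / r - 1 = (w0 - r)/r := by field_simp
        have hlamr : lam * (1 + (w0/r - 1)) / w0 = lam / r := by field_simp; ring
        rw [habs, hlamr, hphi, ← hcdef]
lemma key (α : ℝ) (hα : α ∈ Set.Ioo (0:ℝ) 1) (f : ℝ → ℝ) (hfmeas : Measurable f)
    (hfnn : ∀ t ∈ Set.Ioi (0 : ℝ), 0 ≤ f t)
    (hflap : ∀ c : ℝ, 0 ≤ c →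
      ∫ t in Set.Ioi (0 : ℝ), Real.exp (-c * t) * f t = Real.exp (-(c ^ α))) :
    ∀ (n : ℕ) (lam : ℝ), 0 < lam → ∀ w : Fin n → ℝ, (∀ l, 0 < w l) →
    ∫⁻ s in Set.Ioi (0:ℝ),
        ENNReal.ofReal (s ^ (-(n : ℝ) * α) * Real.exp (-(lam * s) / ∏ l, w l) * f s)
      = ENNReal.ofReal (lam ^ ((n : ℝ) * α) /
            (Real.Gamma α ^ n * ∏ l, w l ^ ((((l : ℕ) : ℝ) + 1) * α - 1)))
        * ∫⁻ r in Set.univ.pi (fun l : Fin n => Set.Ioo (0 : ℝ) (w l)),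
            ENNReal.ofReal
              ((∏ l, ((w l - r l) ^ (α - 1) * r l ^ (-(((n : ℝ) - ((l : ℕ) : ℝ)) * α) - 1))) *
                Real.exp (-(lam ^ α) / (∏ l, r l) ^ α)) := by
  have hα0 := hα.1
  intro n
  induction n with
  | zero =>
    intro lam hlam w hw
    have hpi : (Set.univ.pi (fun l : Fin 0 => Set.Ioo (0 : ℝ) (w l))) = Set.univ := by
      ext x; simp
    simp only [Nat.cast_zero, neg_zero, zero_mul, Real.rpow_zero, one_mul,
      Finset.univ_eq_empty, Finset.prod_empty, div_one, pow_zero, Real.one_rpow, hpi,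
      Measure.restrict_univ]
    rw [laplace_lint hα hfmeas hfnn hflap hlam.le]
    rw [lintegral_const]
    have hvol : (volume : Measure (Fin 0 → ℝ)) Set.univ = 1 := by
      rw [volume_pi, Measure.pi_empty_univ]
    rw [hvol]
    simp [ENNReal.ofReal_one]
  | succ n IH =>
    intro lam hlam w hw
    have hw0 : 0 < w 0 := hw 0
    have hG : 0 < Real.Gamma α := Real.Gamma_pos_of_pos hα0
    have hW' : 0 < ∏ l : Fin n, w l.succ := Finset.prod_pos fun l _ => hw l.succ
    have hP' : 0 < ∏ l : Fin n, w l.succ ^ ((((l:ℕ):ℝ) + 1) * α - 1) :=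
      Finset.prod_pos fun l _ => Real.rpow_pos_of_pos (hw l.succ) _
    have hWsplit : (∏ l : Fin (n+1), w l) = w 0 * ∏ l : Fin n, w l.succ :=
      Fin.prod_univ_succ _
    have hIH : ∀ m : ℝ, 0 < m →
        (∫⁻ s in Set.Ioi (0:ℝ), ENNReal.ofReal
            (s ^ (-(n:ℝ)*α) * Real.exp (-(m*s)/(∏ l : Fin n, w l.succ)) * f s))
          = ENNReal.ofReal (m ^ ((n:ℝ)*α)
              / (Real.Gamma α ^ n * ∏ l : Fin n, w l.succ ^ ((((l:ℕ):ℝ) + 1) * α - 1)))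
            * ∫⁻ b in Set.univ.pi (fun l : Fin n => Set.Ioo (0 : ℝ) (w l.succ)),
                ENNReal.ofReal
                  ((∏ l, ((w l.succ - b l) ^ (α - 1)
                      * b l ^ (-(((n : ℝ) - ((l : ℕ) : ℝ)) * α) - 1))) *
                    Real.exp (-(m ^ α) / (∏ l, b l) ^ α)) := by
      intro m hm
      simpa using IH m hm (fun l => w l.succ) (fun l => hw l.succ)
    push_cast
    simp only [hWsplit]
    rw [lhs_chain α hα0 f hfmeas n lam _ _ hlam hW' hP' hG (w 0) hw0 _ hIH]
    rw [rhs_split α hα0 n lam hlam w hw]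
    rw [← lintegral_const_mul' _ _ ENNReal.ofReal_ne_top]
    refine setLIntegral_congr_fun measurableSet_Ioo
      (fun r hr => ?_)
    obtain ⟨hr0, hrw⟩ := hr
    have hd : 0 < w 0 - r := by linarith
    have hprod : (∏ l : Fin (n+1), w l ^ ((((l:ℕ):ℝ) + 1) * α - 1))
        = w 0 ^ (α - 1) * ((∏ l : Fin n, w l.succ ^ ((((l:ℕ):ℝ) + 1) * α - 1))
            * (∏ l : Fin n, w l.succ) ^ α) := by
      rw [Fin.prod_univ_succ]
      congr 1
      · norm_num
      · rw [← Real.finset_prod_rpow _ _ (fun l _ => (hw l.succ).le) α,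
          ← Finset.prod_mul_distrib]
        refine Finset.prod_congr rfl fun l _ => ?_
        rw [← Real.rpow_add (hw l.succ)]
        congr 1
        push_cast [Fin.val_succ]
        ring
    have hA : (0:ℝ) ≤ (lam/(w 0 * ∏ l : Fin n, w l.succ))^α/Real.Gamma α := by positivity
    have hB : (0:ℝ) ≤ w 0 / r^2 := by positivity
    have hC : (0:ℝ) ≤ ((w 0 - r)/r)^(α-1) := Real.rpow_nonneg (by positivity) _
    have hD : (0:ℝ) ≤ (lam/r)^((n:ℝ)*α)/(Real.Gamma α^n
        * ∏ l : Fin n, w l.succ ^ ((((l:ℕ):ℝ) + 1) * α - 1)) := by positivity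
    calc
      ENNReal.ofReal ((lam/(w 0 * ∏ l : Fin n, w l.succ))^α/Real.Gamma α)
          * (ENNReal.ofReal (w 0/r^2) * (ENNReal.ofReal (((w 0-r)/r)^(α-1))
            * (ENNReal.ofReal ((lam/r)^((n:ℝ)*α)/(Real.Gamma α^n
                * ∏ l : Fin n, w l.succ ^ ((((l:ℕ):ℝ) + 1) * α - 1)))
              * ∫⁻ b in Set.univ.pi (fun l : Fin n => Set.Ioo (0 : ℝ) (w l.succ)),
                ENNReal.ofReal
                  ((∏ l, ((w l.succ - b l) ^ (α - 1)
                      * b l ^ (-(((n : ℝ) - ((l : ℕ) : ℝ)) * α) - 1))) *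
                    Real.exp (-((lam/r) ^ α) / (∏ l, b l) ^ α)))))
        = ENNReal.ofReal ((lam/(w 0 * ∏ l : Fin n, w l.succ))^α/Real.Gamma α
              * (w 0/r^2) * (((w 0-r)/r)^(α-1))
              * ((lam/r)^((n:ℝ)*α)/(Real.Gamma α^n
                * ∏ l : Fin n, w l.succ ^ ((((l:ℕ):ℝ) + 1) * α - 1))))
            * ∫⁻ b in Set.univ.pi (fun l : Fin n => Set.Ioo (0 : ℝ) (w l.succ)),
                ENNReal.ofReal
                  ((∏ l, ((w l.succ - b l) ^ (α - 1)
                      * b l ^ (-(((n : ℝ) - ((l : ℕ) : ℝ)) * α) - 1))) *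
                    Real.exp (-((lam/r) ^ α) / (∏ l, b l) ^ α)) := by
          rw [ENNReal.ofReal_mul (mul_nonneg (mul_nonneg hA hB) hC),
            ENNReal.ofReal_mul (mul_nonneg hA hB), ENNReal.ofReal_mul hA]
          ring
      _ = ENNReal.ofReal (lam ^ (((n:ℝ)+1) * α)
              / (Real.Gamma α ^ (n+1) * (w 0 ^ (α - 1)
                * ((∏ l : Fin n, w l.succ ^ ((((l:ℕ):ℝ) + 1) * α - 1))
                  * (∏ l : Fin n, w l.succ) ^ α)))
              * ((w 0 - r) ^ (α - 1) * r ^ (-(((n:ℝ)+1) * α) - 1)))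
            * ∫⁻ b in Set.univ.pi (fun l : Fin n => Set.Ioo (0 : ℝ) (w l.succ)),
                ENNReal.ofReal
                  ((∏ l, ((w l.succ - b l) ^ (α - 1)
                      * b l ^ (-(((n : ℝ) - ((l : ℕ) : ℝ)) * α) - 1))) *
                    Real.exp (-((lam/r) ^ α) / (∏ l, b l) ^ α)) := by
          rw [star_id hα0 hG hlam hw0 hW' hr0 hd hP' n]
      _ = ENNReal.ofReal (lam ^ (((n:ℝ)+1) * α) /
              (Real.Gamma α ^ (n+1) * ∏ l : Fin (n+1), w l ^ ((((l:ℕ):ℝ) + 1) * α - 1)))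
            * (ENNReal.ofReal ((w 0 - r) ^ (α - 1) * r ^ (-(((n:ℝ)+1) * α) - 1))
              * ∫⁻ b in Set.univ.pi (fun l : Fin n => Set.Ioo (0 : ℝ) (w l.succ)),
                ENNReal.ofReal
                  ((∏ l, ((w l.succ - b l) ^ (α - 1)
                      * b l ^ (-(((n : ℝ) - ((l : ℕ) : ℝ)) * α) - 1))) *
                    Real.exp (-((lam/r) ^ α) / (∏ l, b l) ^ α))) := by
          rw [hprod, ENNReal.ofReal_mul (by positivity)]
          ring
/-- **Lemma 3 (analytic content; the case m = 0, normalized generalized gamma).**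
For an `α`-stable density `f_α`, `n ≥ 1`, `λ > 0` and `0 < w_l < 1`:
`∫₀^∞ s^{-nα} e^{-λ s/∏ w_l} f_α(s) ds` equals
`(λ^{nα}/(Γ(α)^n ∏ w_l^{lα-1}))` times the `n`-fold integral over `∏_l (0, w_l)` of
`∏_l (w_l - r_l)^{α-1} r_l^{-(n-l+1)α-1} e^{-λ^α/(∏ r_l)^α}` (indices 0-based here). -/
theorem stmt10 (α : ℝ) (hα : α ∈ Set.Ioo (0 : ℝ) 1) (f : ℝ → ℝ) (hfmeas : Measurable f)
    (hfnn : ∀ t ∈ Set.Ioi (0 : ℝ), 0 ≤ f t)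
    (hfint : ∫ t in Set.Ioi (0 : ℝ), f t = 1)
    (hflap : ∀ c : ℝ, 0 ≤ c →
      ∫ t in Set.Ioi (0 : ℝ), Real.exp (-c * t) * f t = Real.exp (-(c ^ α)))
    (n : ℕ) (hn : 1 ≤ n) (lam : ℝ) (hlam : 0 < lam)
    (w : Fin n → ℝ) (hw : ∀ l, w l ∈ Set.Ioo (0 : ℝ) 1) :
    ∫ s in Set.Ioi (0 : ℝ), s ^ (-(n : ℝ) * α) * Real.exp (-(lam * s) / ∏ l, w l) * f s
      = (lam ^ ((n : ℝ) * α) /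
            (Real.Gamma α ^ n * ∏ l, w l ^ ((((l : ℕ) : ℝ) + 1) * α - 1))) *
          ∫ r in Set.univ.pi (fun l : Fin n => Set.Ioo (0 : ℝ) (w l)),
            (∏ l, ((w l - r l) ^ (α - 1) * r l ^ (-(((n : ℝ) - ((l : ℕ) : ℝ)) * α) - 1))) *
              Real.exp (-(lam ^ α) / (∏ l, r l) ^ α) := by
  have hα0 := hα.1
  have hG : 0 < Real.Gamma α := Real.Gamma_pos_of_pos hα0
  have hwpos : ∀ l, 0 < w l := fun l => (hw l).1
  have hkey := key α hα f hfmeas hfnn hflap n lam hlam w hwpos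
  have hpimeas : MeasurableSet (Set.univ.pi (fun l : Fin n => Set.Ioo (0 : ℝ) (w l))) :=
    MeasurableSet.univ_pi fun l => measurableSet_Ioo
  -- LHS conversion
  have hnnL : 0 ≤ᵐ[volume.restrict (Set.Ioi (0:ℝ))]
      fun s => s ^ (-(n : ℝ) * α) * Real.exp (-(lam * s) / ∏ l, w l) * f s := by
    filter_upwards [ae_restrict_mem measurableSet_Ioi] with s hs
    have hs' : (0:ℝ) < s := hs
    exact mul_nonneg (mul_nonneg (Real.rpow_nonneg hs'.le _) (Real.exp_nonneg _)) (hfnn s hs)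
  have hmL : AEStronglyMeasurable
      (fun s => s ^ (-(n : ℝ) * α) * Real.exp (-(lam * s) / ∏ l, w l) * f s)
      (volume.restrict (Set.Ioi (0:ℝ))) := by
    apply Measurable.aestronglyMeasurable; fun_prop
  -- RHS conversion
  have hnnR : 0 ≤ᵐ[volume.restrict (Set.univ.pi (fun l : Fin n => Set.Ioo (0 : ℝ) (w l)))]
      fun r : Fin n → ℝ =>
        (∏ l, ((w l - r l) ^ (α - 1) * r l ^ (-(((n : ℝ) - ((l : ℕ) : ℝ)) * α) - 1))) *
          Real.exp (-(lam ^ α) / (∏ l, r l) ^ α) := by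
    filter_upwards [ae_restrict_mem hpimeas] with r hr
    have h1 : ∀ l, 0 < r l ∧ r l < w l := fun l => by
      simpa using (Set.mem_univ_pi.1 hr) l
    refine mul_nonneg (Finset.prod_nonneg fun l _ => mul_nonneg ?_ ?_) (Real.exp_nonneg _)
    · exact Real.rpow_nonneg (by linarith [(h1 l).2]) _
    · exact Real.rpow_nonneg (h1 l).1.le _
  have hmR : AEStronglyMeasurable
      (fun r : Fin n → ℝ =>
        (∏ l, ((w l - r l) ^ (α - 1) * r l ^ (-(((n : ℝ) - ((l : ℕ) : ℝ)) * α) - 1))) *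
          Real.exp (-(lam ^ α) / (∏ l, r l) ^ α))
      (volume.restrict (Set.univ.pi (fun l : Fin n => Set.Ioo (0 : ℝ) (w l)))) := by
    apply Measurable.aestronglyMeasurable; fun_prop
  have hprodpos : 0 < ∏ l, w l ^ ((((l : ℕ) : ℝ) + 1) * α - 1) :=
    Finset.prod_pos fun l _ => Real.rpow_pos_of_pos (hwpos l) _
  have hpref : (0:ℝ) ≤ lam ^ ((n : ℝ) * α) /
      (Real.Gamma α ^ n * ∏ l, w l ^ ((((l : ℕ) : ℝ) + 1) * α - 1)) :=
    le_of_lt (div_pos (Real.rpow_pos_of_pos hlam _) (mul_pos (pow_pos hG n) hprodpos))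
  rw [integral_eq_lintegral_of_nonneg_ae hnnL hmL,
    integral_eq_lintegral_of_nonneg_ae hnnR hmR, hkey, ENNReal.toReal_mul,
    ENNReal.toReal_ofReal hpref]
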